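/- Let X : ℝⁿ → ℝⁿ be a C¹ vector field whose Jacobian DX(x) is a symmetric linear map for every x ∈ ℝⁿ (i.e., the external tensor F = DX − (DX)ᵀ vanishes identically), and let f(x) = ½‖X(x)‖². Then every solution x : I → ℝⁿ of the flow equation x′(t) = X(x(t)) satisfies the potential dynamical system x″(t) = ∇f(x(t)) for all t ∈ I. -/

import Mathlib

open scoped RealInnerProductSpace

lemma grad_energy {n : ℕ}
    (X : EuclideanSpace ℝ (Fin n) → EuclideanSpace ℝ (Fin n))
    (hX : ContDiff ℝ 1 X)
    (f : EuclideanSpace ℝ (Fin n) → ℝ)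
    (hf : ∀ x, f x = (1 / 2) * ‖X x‖ ^ 2) (x : EuclideanSpace ℝ (Fin n)) :
    HasGradientAt f (ContinuousLinearMap.adjoint (fderiv ℝ X x) (X x)) x := by
  have hA : HasFDerivAt X (fderiv ℝ X x) x :=
    (hX.differentiable one_ne_zero x).hasFDerivAt
  have h1 := (hA.inner ℝ hA).const_mul (1 / 2 : ℝ)
  have hfun : f = fun y => (1 / 2 : ℝ) * ⟪X y, X y⟫ := by
    funext y; rw [hf y, real_inner_self_eq_norm_sq]
  rw [hasGradientAt_iff_hasFDerivAt]
  rw [hfun]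
  refine h1.congr_fderiv ?_
  ext v
  simp only [InnerProductSpace.toDual_apply_apply, ContinuousLinearMap.smul_apply,
    ContinuousLinearMap.comp_apply, ContinuousLinearMap.prod_apply,
    fderivInnerCLM_apply, ContinuousLinearMap.adjoint_inner_left, smul_eq_mul]
  rw [real_inner_comm ((fderiv ℝ X x) v) (X x)]
  ring

theorem flow_solution_potential_dynamics {n : ℕ}
    (X : EuclideanSpace ℝ (Fin n) → EuclideanSpace ℝ (Fin n))
    (hX : ContDiff ℝ 1 X)
    (hsymm : ∀ x, ContinuousLinearMap.adjoint (fderiv ℝ X x) = fderiv ℝ X x)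
    (f : EuclideanSpace ℝ (Fin n) → ℝ)
    (hf : ∀ x, f x = (1 / 2) * ‖X x‖ ^ 2)
    (a b : ℝ) (c : ℝ → EuclideanSpace ℝ (Fin n))
    (hc : ∀ t ∈ Set.Ioo a b, HasDerivAt c (X (c t)) t) :
    ∀ t ∈ Set.Ioo a b, HasDerivAt (deriv c) (gradient f (c t)) t := by
  intro t ht
  have hA : HasFDerivAt X (fderiv ℝ X (c t)) (c t) :=
    (hX.differentiable one_ne_zero (c t)).hasFDerivAt
  have h2 : HasDerivAt (fun s => X (c s)) ((fderiv ℝ X (c t)) (X (c t))) t :=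
    hA.comp_hasDerivAt t (hc t ht)
  have heq : deriv c =ᶠ[nhds t] fun s => X (c s) := by
    filter_upwards [Ioo_mem_nhds ht.1 ht.2] with s hs
    exact (hc s hs).deriv
  have h3 : HasDerivAt (deriv c) ((fderiv ℝ X (c t)) (X (c t))) t :=
    h2.congr_of_eventuallyEq heq
  have hg := grad_energy X hX f hf (c t)
  rw [hsymm] at hg
  rwa [hg.gradient]
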